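/- Let J be a graph on m vertices with ω(J) ≤ W and α(J) < s. Form G by taking two disjoint copies J₁, J₂ of J and making every vertex of J₁ adjacent to every vertex of J₂. Then G has 2m vertices, α(G) < s, every clique of G covers at most W² of the m² edges between V(J₁) and V(J₂), and hence every clique cover of G has size at least m²/W². -/

import Mathlib

open SimpleGraph Finset

/-- A stable (independent) set: pairwise nonadjacent vertices. -/
def IsStableSet {V : Type*} (G : SimpleGraph V) (T : Finset V) : Prop :=
  ∀ ⦃u⦄, u ∈ T → ∀ ⦃v⦄, v ∈ T → u ≠ v → ¬G.Adj u v

/-- A clique cover of `G`. -/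
def IsCliqueCover {V : Type*} (G : SimpleGraph V) (C : Finset (Finset V)) : Prop :=
  (∀ X ∈ C, G.IsClique (X : Set V)) ∧
    ∀ u v : V, G.Adj u v → ∃ X ∈ C, u ∈ X ∧ v ∈ X

/-- The join of two graphs: both graphs on their own parts, all cross pairs adjacent. -/
def joinGraph {V W : Type*} (J₁ : SimpleGraph V) (J₂ : SimpleGraph W) :
    SimpleGraph (V ⊕ W) where
  Adj x y :=
    match x, y with
    | Sum.inl a, Sum.inl b => J₁.Adj a b
    | Sum.inr a, Sum.inr b => J₂.Adj a b
    | Sum.inl _, Sum.inr _ => True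
    | Sum.inr _, Sum.inl _ => True
  symm := ⟨by rintro (a | a) (b | b) h <;> simp_all [SimpleGraph.adj_comm]⟩
  loopless := ⟨by rintro (a | a) h <;> simp_all⟩

section Aux
variable {V : Type*} [Fintype V] [DecidableEq V] {J : SimpleGraph V}

lemma aux_left_card (K : Finset (V ⊕ V)) :
    (K.filter (fun x => x.isLeft = true)) = (Finset.univ.filter (fun a : V => Sum.inl a ∈ K)).image Sum.inl := by
  ext x
  cases x <;> simp

lemma aux_right_card (K : Finset (V ⊕ V)) :
    (K.filter (fun x => x.isRight = true)) = (Finset.univ.filter (fun a : V => Sum.inr a ∈ K)).image Sum.inr := by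
  ext x
  cases x <;> simp

lemma aux_clique_left (K : Finset (V ⊕ V)) (hK : (joinGraph J J).IsClique (K : Set (V ⊕ V))) :
    J.IsClique ((Finset.univ.filter (fun a : V => Sum.inl a ∈ K)) : Set V) := by
  intro a ha b hb hab
  simp only [Finset.coe_filter, Set.mem_setOf_eq] at ha hb
  have := hK ha.2 hb.2 (by simpa using hab)
  exact this

lemma aux_clique_right (K : Finset (V ⊕ V)) (hK : (joinGraph J J).IsClique (K : Set (V ⊕ V))) :
    J.IsClique ((Finset.univ.filter (fun a : V => Sum.inr a ∈ K)) : Set V) := by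
  intro a ha b hb hab
  simp only [Finset.coe_filter, Set.mem_setOf_eq] at ha hb
  have := hK ha.2 hb.2 (by simpa using hab)
  exact this

end Aux

theorem stmt_16 {V : Type*} [Fintype V] [DecidableEq V] (J : SimpleGraph V) (s W : ℕ)
    (hω : ∀ K : Finset V, J.IsClique (K : Set V) → K.card ≤ W)
    (hα : ∀ T : Finset V, IsStableSet J T → T.card < s) :
    Fintype.card (V ⊕ V) = 2 * Fintype.card V ∧
    (∀ T : Finset (V ⊕ V), IsStableSet (joinGraph J J) T → T.card < s) ∧
    (∀ K : Finset (V ⊕ V), (joinGraph J J).IsClique (K : Set (V ⊕ V)) →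
      (K.filter (fun x => x.isLeft = true)).card *
        (K.filter (fun x => x.isRight = true)).card ≤ W ^ 2) ∧
    ∀ C : Finset (Finset (V ⊕ V)), IsCliqueCover (joinGraph J J) C →
      (Fintype.card V : ℝ) ^ 2 / (W : ℝ) ^ 2 ≤ (C.card : ℝ) := by
  have hcliqueL : ∀ K : Finset (V ⊕ V), (joinGraph J J).IsClique (K : Set (V ⊕ V)) →
      (K.filter (fun x => x.isLeft = true)).card ≤ W := by
    intro K hK
    rw [aux_left_card, Finset.card_image_of_injective _ Sum.inl_injective]
    exact hω _ (aux_clique_left K hK)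
  have hcliqueR : ∀ K : Finset (V ⊕ V), (joinGraph J J).IsClique (K : Set (V ⊕ V)) →
      (K.filter (fun x => x.isRight = true)).card ≤ W := by
    intro K hK
    rw [aux_right_card, Finset.card_image_of_injective _ Sum.inr_injective]
    exact hω _ (aux_clique_right K hK)
  refine ⟨by simp [Fintype.card_sum, two_mul], ?_, ?_, ?_⟩
  · -- stability
    intro T hT
    by_cases hL : ∃ a, Sum.inl a ∈ T
    · obtain ⟨a, ha⟩ := hL
      have hall : ∀ x ∈ T, ∃ b, x = Sum.inl b := by
        intro x hx
        cases x with
        | inl b => exact ⟨b, rfl⟩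
        | inr b =>
          exact absurd (hT ha hx (by simp) (by trivial)) (fun h => h)
      have hTeq : T = (Finset.univ.filter (fun b : V => Sum.inl b ∈ T)).image Sum.inl := by
        ext x
        constructor
        · intro hx
          obtain ⟨b, rfl⟩ := hall x hx
          simp [hx]
        · intro hx
          simp only [Finset.mem_image, Finset.mem_filter] at hx
          obtain ⟨b, ⟨_, hb⟩, rfl⟩ := hx
          exact hb
      rw [hTeq, Finset.card_image_of_injective _ Sum.inl_injective]
      apply hα
      intro u hu v hv huv hadj
      simp only [Finset.mem_filter] at hu hv
      exact hT hu.2 hv.2 (by simpa using huv) hadj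
    · push_neg at hL
      have hall : ∀ x ∈ T, ∃ b, x = Sum.inr b := by
        intro x hx
        cases x with
        | inl b => exact absurd hx (by simpa using hL b)
        | inr b => exact ⟨b, rfl⟩
      have hTeq : T = (Finset.univ.filter (fun b : V => Sum.inr b ∈ T)).image Sum.inr := by
        ext x
        constructor
        · intro hx
          obtain ⟨b, rfl⟩ := hall x hx
          simp [hx]
        · intro hx
          simp only [Finset.mem_image, Finset.mem_filter] at hx
          obtain ⟨b, ⟨_, hb⟩, rfl⟩ := hx
          exact hb
      rw [hTeq, Finset.card_image_of_injective _ Sum.inr_injective]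
      apply hα
      intro u hu v hv huv hadj
      simp only [Finset.mem_filter] at hu hv
      exact hT hu.2 hv.2 (by simpa using huv) hadj
  · intro K hK
    calc (K.filter (fun x => x.isLeft = true)).card *
        (K.filter (fun x => x.isRight = true)).card ≤ W * W :=
          Nat.mul_le_mul (hcliqueL K hK) (hcliqueR K hK)
      _ = W ^ 2 := (sq W).symm
  · intro C hC
    have key : Fintype.card V ^ 2 ≤ C.card * W ^ 2 := by
      have hsub : (Finset.univ : Finset (V × V)) ⊆
          C.biUnion (fun X => Finset.univ.filter
            (fun p : V × V => Sum.inl p.1 ∈ X ∧ Sum.inr p.2 ∈ X)) := by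
        intro p _
        obtain ⟨X, hX, h1, h2⟩ := hC.2 (Sum.inl p.1) (Sum.inr p.2) (by trivial)
        simp only [Finset.mem_biUnion, Finset.mem_filter, Finset.mem_univ, true_and]
        exact ⟨X, hX, h1, h2⟩
      have h1 := Finset.card_le_card hsub
      have h2 : (C.biUnion (fun X => Finset.univ.filter
            (fun p : V × V => Sum.inl p.1 ∈ X ∧ Sum.inr p.2 ∈ X))).card ≤
          ∑ X ∈ C, (Finset.univ.filter
            (fun p : V × V => Sum.inl p.1 ∈ X ∧ Sum.inr p.2 ∈ X)).card :=
        Finset.card_biUnion_le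
      have h3 : ∀ X ∈ C, (Finset.univ.filter
            (fun p : V × V => Sum.inl p.1 ∈ X ∧ Sum.inr p.2 ∈ X)).card ≤ W ^ 2 := by
        intro X hX
        have heq : (Finset.univ.filter
            (fun p : V × V => Sum.inl p.1 ∈ X ∧ Sum.inr p.2 ∈ X)) =
            (Finset.univ.filter (fun a : V => Sum.inl a ∈ X)) ×ˢ
            (Finset.univ.filter (fun b : V => Sum.inr b ∈ X)) := by
          ext p
          simp [Finset.mem_product, and_assoc]
        rw [heq, Finset.card_product]
        have hXc := hC.1 X hX
        calc _ ≤ W * W := Nat.mul_le_mul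
              (hω _ (aux_clique_left X hXc)) (hω _ (aux_clique_right X hXc))
          _ = W ^ 2 := (sq W).symm
      calc Fintype.card V ^ 2 = (Finset.univ : Finset (V × V)).card := by
            simp [Fintype.card_prod, sq]
        _ ≤ _ := h1
        _ ≤ _ := h2
        _ ≤ ∑ _X ∈ C, W ^ 2 := Finset.sum_le_sum h3
        _ = C.card * W ^ 2 := by rw [Finset.sum_const, smul_eq_mul]
    rcases isEmpty_or_nonempty V with hV | hV
    · simp [Fintype.card_eq_zero]
    · have hW : 0 < W := by
        obtain ⟨v⟩ := hV
        have := hω {v} (by simp)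
        simpa using this.trans_lt' (by simp)
      rw [div_le_iff₀ (by positivity)]
      calc ((Fintype.card V : ℝ)) ^ 2 = ((Fintype.card V ^ 2 : ℕ) : ℝ) := by push_cast; ring
        _ ≤ ((C.card * W ^ 2 : ℕ) : ℝ) := by exact_mod_cast key
        _ = (C.card : ℝ) * (W : ℝ) ^ 2 := by push_cast; ring
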